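/- Define σ*(t) = inf{ ℙ((ζ−t,V) ∈ C)/(ν_γ×μ)(C) : C ∈ 𝔅_{ℝ₊}⊗𝒮, (ν_γ×μ)(C) > 0 } for t ∈ ℝ₊. Then σ* takes values in [0,1] and the function t ↦ σ*(t)e^{γt} is nondecreasing and right-continuous on ℝ₊. -/

import Mathlib

open MeasureTheory ProbabilityTheory Real Set
open scoped ENNReal Topology

/-- The exponential distribution on `[0, ∞)` with mean `γ⁻¹` (rate `γ`), as a measure on `ℝ`. -/
noncomputable def expν (γ : ℝ) : Measure ℝ :=
  MeasureTheory.volume.withDensity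
    (fun x => if 0 ≤ x then ENNReal.ofReal (γ * Real.exp (-γ * x)) else 0)

lemma expν_density_measurable (γ : ℝ) :
    Measurable (fun x : ℝ => if 0 ≤ x then ENNReal.ofReal (γ * Real.exp (-γ * x)) else 0) := by
  apply Measurable.ite measurableSet_Ici _ measurable_const
  fun_prop

lemma expν_eq (γ : ℝ) : expν γ = MeasureTheory.volume.withDensity (exponentialPDF γ) := by
  unfold expν
  congr 1
  funext x
  rw [exponentialPDF_eq]
  split_ifs with h
  · rw [neg_mul]
  · simp

lemma expν_prob {γ : ℝ} (hγ : 0 < γ) : IsProbabilityMeasure (expν γ) := by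
  constructor
  rw [expν_eq, withDensity_apply _ MeasurableSet.univ, Measure.restrict_univ]
  exact lintegral_exponentialPDF_eq_one hγ

lemma expν_singleton (γ t : ℝ) : expν γ {t} = 0 :=
  (withDensity_absolutelyContinuous _ _) (measure_singleton t)

lemma expν_Iio (γ : ℝ) : expν γ (Set.Iio 0) = 0 := by
  rw [expν, withDensity_apply _ measurableSet_Iio]
  rw [MeasureTheory.setLIntegral_congr_fun measurableSet_Iio
    (fun x (hx : x ∈ Set.Iio 0) => if_neg (not_le.mpr hx))]
  simp

/-- Key shift computation for the exponential product measure. -/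
lemma expν_shift {S : Type*} [MeasurableSpace S] (μ : Measure S) [IsProbabilityMeasure μ]
    {γ : ℝ} (hγ : 0 < γ) {r : ℝ} (hr : 0 ≤ r) {C : Set (ℝ × S)} (hCm : MeasurableSet C) :
    ENNReal.ofReal (Real.exp (-γ * r)) * (expν γ).prod μ C ≤
      (expν γ).prod μ ((fun p : ℝ × S => (p.1 - r, p.2)) ⁻¹' C) ∧
    (C ⊆ Set.Ici 0 ×ˢ Set.univ →
      (expν γ).prod μ ((fun p : ℝ × S => (p.1 - r, p.2)) ⁻¹' C) =
        ENNReal.ofReal (Real.exp (-γ * r)) * (expν γ).prod μ C) := by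
  set f : ℝ → ℝ≥0∞ := fun x => if 0 ≤ x then ENNReal.ofReal (γ * Real.exp (-γ * x)) else 0 with hf_def
  have hf : Measurable f := expν_density_measurable γ
  set g : ℝ → ℝ≥0∞ := fun x => μ (Prod.mk x ⁻¹' C) with hg_def
  have hg : Measurable g := measurable_measure_prodMk_left hCm
  have hT : Measurable (fun p : ℝ × S => (p.1 - r, p.2)) :=
    (measurable_fst.sub measurable_const).prodMk measurable_snd
  have hDm : MeasurableSet ((fun p : ℝ × S => (p.1 - r, p.2)) ⁻¹' C) := hT hCm
  have hC_eq : (expν γ).prod μ C = ∫⁻ x, f x * g x := by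
    rw [Measure.prod_apply hCm, expν,
      lintegral_withDensity_eq_lintegral_mul _ hf hg]
    rfl
  have hD_eq : (expν γ).prod μ ((fun p : ℝ × S => (p.1 - r, p.2)) ⁻¹' C)
      = ∫⁻ x, f (x + r) * g x := by
    have hg' : Measurable fun x : ℝ => g (x - r) := by fun_prop
    rw [Measure.prod_apply hDm]
    have hsl : ∀ x : ℝ, μ (Prod.mk x ⁻¹' ((fun p : ℝ × S => (p.1 - r, p.2)) ⁻¹' C)) = g (x - r) := by
      intro x; rfl
    simp_rw [hsl]
    rw [expν, lintegral_withDensity_eq_lintegral_mul _ hf hg']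
    calc (∫⁻ x, (f * fun x => g (x - r)) x) = ∫⁻ x, f (x + r) * g (x + r - r) :=
          (lintegral_add_right_eq_self (fun x => (f * fun y => g (y - r)) x) r).symm
      _ = ∫⁻ x, f (x + r) * g x := by simp
  have hpt : ∀ x : ℝ, 0 ≤ x → f (x + r) = ENNReal.ofReal (Real.exp (-γ * r)) * f x := by
    intro x hx
    have hx' : 0 ≤ x + r := by linarith
    simp only [hf_def, if_pos hx, if_pos hx']
    rw [← ENNReal.ofReal_mul (exp_nonneg _)]
    congr 1
    rw [show (-γ) * (x + r) = -γ * x + -γ * r by ring, Real.exp_add]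
    ring
  constructor
  · rw [hC_eq, hD_eq, ← lintegral_const_mul _ (f := fun x => f x * g x) (hf.mul hg)]
    refine lintegral_mono fun x => ?_
    rcases le_or_gt 0 x with hx | hx
    · rw [← mul_assoc, ← hpt x hx]
    · simp [hf_def, if_neg (not_le.mpr hx)]
  · intro hsub
    rw [hC_eq, hD_eq, ← lintegral_const_mul _ (f := fun x => f x * g x) (hf.mul hg)]
    refine lintegral_congr fun x => ?_
    rcases le_or_gt 0 x with hx | hx
    · rw [← mul_assoc, ← hpt x hx]
    · have hgx : g x = 0 := by
        have hemp : Prod.mk x ⁻¹' C = ∅ := by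
          ext y
          simp only [Set.mem_preimage, Set.mem_empty_iff_false, iff_false]
          intro hy
          exact absurd (hsub hy).1 (not_le.mpr hx)
        simp [hg_def, hemp]
      simp [hgx]

/-- The optimal choice `σ*(t) = inf { ℙ((ζ−t,V) ∈ C)/(ν_γ×μ)(C) }` takes values in `[0,1]`
and `t ↦ σ*(t)e^{γt}` is nondecreasing and right-continuous on `ℝ₊`. -/
theorem stmt_3 {Ω : Type*} [MeasurableSpace Ω] (P : Measure Ω) [IsProbabilityMeasure P]
    {S : Type*} [MeasurableSpace S] (μ : Measure S) [IsProbabilityMeasure μ]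
    (γ : ℝ) (hγ : 0 < γ)
    (ζ : Ω → ℝ) (V : Ω → S) (hζm : Measurable ζ) (hVm : Measurable V)
    (hζ0 : ∀ ω, 0 ≤ ζ ω)
    (σStar : ℝ → ℝ≥0∞)
    (hσStar : ∀ t, σStar t =
      ⨅ (C : Set (ℝ × S)) (_ : MeasurableSet C ∧ 0 < ((expν γ).prod μ) C),
        P ((fun ω => (ζ ω - t, V ω)) ⁻¹' C) / ((expν γ).prod μ) C) :
    (∀ t, 0 ≤ t → σStar t ≤ 1) ∧
    (∀ s t, 0 ≤ s → s ≤ t →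
      σStar s * ENNReal.ofReal (Real.exp (γ * s)) ≤
        σStar t * ENNReal.ofReal (Real.exp (γ * t))) ∧
    (∀ t, 0 ≤ t →
      ContinuousWithinAt (fun u => σStar u * ENNReal.ofReal (Real.exp (γ * u)))
        (Set.Ici t) t) := by
  classical
  haveI : IsProbabilityMeasure (expν γ) := expν_prob hγ
  set νμ : Measure (ℝ × S) := (expν γ).prod μ with hνμ
  have hνμ_top : ∀ A : Set (ℝ × S), νμ A ≠ ⊤ := fun A => measure_ne_top _ _
  set g : ℝ → ℝ≥0∞ := fun t =>
    ⨅ (D : Set (ℝ × S)) (_ : MeasurableSet D ∧ D ⊆ Set.Ici t ×ˢ Set.univ ∧ 0 < νμ D),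
      P ((fun ω => (ζ ω, V ω)) ⁻¹' D) / νμ D with hg_def
  have hg_apply : ∀ t : ℝ, g t =
      ⨅ (D : Set (ℝ × S)) (_ : MeasurableSet D ∧ D ⊆ Set.Ici t ×ˢ Set.univ ∧ 0 < νμ D),
        P ((fun ω => (ζ ω, V ω)) ⁻¹' D) / νμ D := fun t => by rw [hg_def]
  have hg_mono : Monotone g := by
    intro s t hst
    rw [hg_apply s, hg_apply t]
    refine le_iInf fun D => le_iInf fun hD => ?_
    exact iInf₂_le D ⟨hD.1, hD.2.1.trans (Set.prod_mono_left (Set.Ici_subset_Ici.mpr hst)), hD.2.2⟩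
  have key : ∀ t : ℝ, 0 ≤ t → σStar t * ENNReal.ofReal (Real.exp (γ * t)) = g t := by
    intro t ht
    set c : ℝ≥0∞ := ENNReal.ofReal (Real.exp (γ * t)) with hc_def
    have hc0 : c ≠ 0 := by simp [hc_def, exp_pos]
    have hct : c ≠ ⊤ := ENNReal.ofReal_ne_top
    have hcc : ENNReal.ofReal (Real.exp (-γ * t)) * c = 1 := by
      rw [hc_def, ← ENNReal.ofReal_mul (exp_nonneg _), ← Real.exp_add]
      norm_num
    have hcinv : c⁻¹ = ENNReal.ofReal (Real.exp (-γ * t)) := by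
      rw [hc_def, ← ENNReal.ofReal_inv_of_pos (exp_pos _), ← Real.exp_neg, neg_mul]
    refine le_antisymm ?_ ?_
    · -- σStar t * c ≤ g t
      rw [hg_apply t]
      refine le_iInf fun D => le_iInf fun hD => ?_
      obtain ⟨hDm, hDsub, hDpos⟩ := hD
      set C : Set (ℝ × S) := (fun p : ℝ × S => (p.1 + t, p.2)) ⁻¹' D with hC_def
      have hCm : MeasurableSet C :=
        ((measurable_fst.add measurable_const).prodMk measurable_snd) hDm
      have hTD : (fun p : ℝ × S => (p.1 - t, p.2)) ⁻¹' C = D := by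
        ext p
        simp [hC_def]
      have hνD : νμ D = ENNReal.ofReal (Real.exp (-γ * t)) * νμ C := by
        rw [← hTD]
        refine (expν_shift μ hγ ht hCm).2 fun p hp => ?_
        refine ⟨?_, Set.mem_univ _⟩
        have h1 := (hDsub hp).1
        simp only [Set.mem_Ici] at h1 ⊢
        linarith
      have hνC : νμ C = c * νμ D := by
        rw [hνD, ← mul_assoc, mul_comm c, hcc, one_mul]
      have hCpos : 0 < νμ C := by
        rw [hνC]
        exact ENNReal.mul_pos hc0 hDpos.ne'
      have hpre : (fun ω => (ζ ω - t, V ω)) ⁻¹' C = (fun ω => (ζ ω, V ω)) ⁻¹' D := by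
        ext ω
        simp [hC_def]
      have h1 : σStar t ≤ P ((fun ω => (ζ ω, V ω)) ⁻¹' D) / νμ C := by
        rw [hσStar t, ← hpre]
        exact iInf₂_le C ⟨hCm, hCpos⟩
      rw [ENNReal.le_div_iff_mul_le (Or.inl hCpos.ne') (Or.inl (hνμ_top C))] at h1
      rw [ENNReal.le_div_iff_mul_le (Or.inl hDpos.ne') (Or.inl (hνμ_top D))]
      calc σStar t * c * νμ D = σStar t * (c * νμ D) := mul_assoc _ _ _
        _ = σStar t * νμ C := by rw [hνC]
        _ ≤ _ := h1
    · -- g t ≤ σStar t * c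
      rw [← ENNReal.div_le_iff_le_mul (Or.inl hc0) (Or.inl hct), hσStar t]
      refine le_iInf fun C => le_iInf fun hC => ?_
      obtain ⟨hCm, hCpos⟩ := hC
      set C' : Set (ℝ × S) := C ∩ (Set.Ici 0 ×ˢ Set.univ) with hC'_def
      have hC'm : MeasurableSet C' := hCm.inter (measurableSet_Ici.prod MeasurableSet.univ)
      have hC'sub : C' ⊆ Set.Ici 0 ×ˢ Set.univ := Set.inter_subset_right
      have hνC' : νμ C' = νμ C := by
        have h0 : νμ (C \ (Set.Ici 0 ×ˢ Set.univ)) = 0 := by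
          refine measure_mono_null (fun p hp => ?_)
            (show νμ (Set.Iio 0 ×ˢ (Set.univ : Set S)) = 0 from ?_)
          · rcases hp with ⟨hp1, hp2⟩
            refine ⟨?_, Set.mem_univ _⟩
            simp only [Set.mem_prod, Set.mem_Ici, Set.mem_univ, and_true] at hp2
            exact not_le.mp hp2
          · rw [hνμ, Measure.prod_prod, expν_Iio]
            simp
        have h2 := measure_inter_add_diff (μ := νμ) C
          ((measurableSet_Ici (a := (0:ℝ))).prod (MeasurableSet.univ (α := S)))
        rw [← h2, h0, add_zero]
      set D : Set (ℝ × S) := (fun p : ℝ × S => (p.1 - t, p.2)) ⁻¹' C' with hD_def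
      have hDm : MeasurableSet D :=
        ((measurable_fst.sub measurable_const).prodMk measurable_snd) hC'm
      have hDsub : D ⊆ Set.Ici t ×ˢ Set.univ := by
        intro p hp
        refine ⟨?_, Set.mem_univ _⟩
        have h1 := (hC'sub hp).1
        simp only [Set.mem_Ici] at h1 ⊢
        linarith
      have hνD : νμ D = c⁻¹ * νμ C := by
        rw [hD_def, (expν_shift μ hγ ht hC'm).2 hC'sub, hνC', hcinv]
      have hDpos : 0 < νμ D := by
        rw [hνD, hcinv]
        exact ENNReal.mul_pos (by simp [exp_pos]) hCpos.ne'
      have hpre : (fun ω => (ζ ω, V ω)) ⁻¹' D ⊆ (fun ω => (ζ ω - t, V ω)) ⁻¹' C := by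
        intro ω hω
        exact Set.inter_subset_left (hω : (ζ ω - t, V ω) ∈ C')
      have h1 : g t ≤ P ((fun ω => (ζ ω - t, V ω)) ⁻¹' C) / νμ D := by
        rw [hg_apply t]
        exact (iInf₂_le D ⟨hDm, hDsub, hDpos⟩).trans
          (ENNReal.div_le_div_right (measure_mono hpre) _)
      rw [ENNReal.le_div_iff_mul_le (Or.inl hDpos.ne') (Or.inl (hνμ_top D))] at h1
      rw [ENNReal.le_div_iff_mul_le (Or.inl hCpos.ne') (Or.inl (hνμ_top C))]
      calc g t / c * νμ C = g t * (c⁻¹ * νμ C) := by rw [div_eq_mul_inv, mul_assoc]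
        _ = g t * νμ D := by rw [← hνD]
        _ ≤ _ := h1
  -- right limits of g
  have hsInf : ∀ t : ℝ, sInf (g '' Set.Ioi t) = g t := by
    intro t
    refine le_antisymm ?_ (le_sInf ?_)
    · rw [hg_apply t]
      refine le_iInf fun D => le_iInf fun hD => ?_
      obtain ⟨hDm, hDsub, hDpos⟩ := hD
      set E : ℕ → Set (ℝ × S) := fun n => D ∩ (Set.Ici (t + 1/(n+1)) ×ˢ Set.univ) with hE_def
      have hEm : ∀ n, MeasurableSet (E n) :=
        fun n => hDm.inter (measurableSet_Ici.prod MeasurableSet.univ)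
      have hEmono : Monotone E := by
        intro n m hnm
        refine Set.inter_subset_inter_right _
          (Set.prod_mono_left (Set.Ici_subset_Ici.mpr ?_))
        have h0 : (n : ℝ) ≤ m := Nat.cast_le.mpr hnm
        have h1 : (1:ℝ)/(m+1) ≤ 1/(n+1) :=
          one_div_le_one_div_of_le (by positivity) (by linarith)
        linarith
      have hUnion : ⋃ n, E n = D ∩ (Set.Ioi t ×ˢ Set.univ) := by
        ext p
        simp only [hE_def, Set.mem_iUnion, Set.mem_inter_iff, Set.mem_prod, Set.mem_Ici,
          Set.mem_Ioi, Set.mem_univ, and_true]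
        constructor
        · rintro ⟨n, hpD, hp1⟩
          have h2 : (0:ℝ) < 1/(n+1) := by positivity
          exact ⟨hpD, by linarith⟩
        · rintro ⟨hpD, hp1⟩
          obtain ⟨n, hn⟩ := exists_nat_one_div_lt (sub_pos.mpr hp1)
          exact ⟨n, hpD, by linarith⟩
      have hDIoi : D ∩ (Set.Ioi t ×ˢ Set.univ) = D \ ({t} ×ˢ (Set.univ : Set S)) := by
        ext p
        simp only [Set.mem_inter_iff, Set.mem_diff, Set.mem_prod, Set.mem_Ioi,
          Set.mem_singleton_iff, Set.mem_univ, and_true]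
        constructor
        · rintro ⟨hpD, hp1⟩
          exact ⟨hpD, fun h => absurd h (ne_of_gt hp1)⟩
        · rintro ⟨hpD, hne⟩
          have h1 := (hDsub hpD).1
          simp only [Set.mem_Ici] at h1
          exact ⟨hpD, lt_of_le_of_ne h1 (Ne.symm hne)⟩
      have hnull : νμ ({t} ×ˢ (Set.univ : Set S)) = 0 := by
        rw [hνμ, Measure.prod_prod, expν_singleton]
        simp
      have htend : Filter.Tendsto (fun n => νμ (E n)) Filter.atTop (𝓝 (νμ D)) := by
        have h3 := tendsto_measure_iUnion_atTop (μ := νμ) hEmono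
        rw [hUnion, hDIoi, measure_diff_null hnull] at h3
        exact h3
      have hTdiv : Filter.Tendsto (fun n => P ((fun ω => (ζ ω, V ω)) ⁻¹' D) / νμ (E n))
          Filter.atTop (𝓝 (P ((fun ω => (ζ ω, V ω)) ⁻¹' D) / νμ D)) :=
        ENNReal.Tendsto.const_div htend (Or.inl (hνμ_top D))
      refine ge_of_tendsto hTdiv ?_
      filter_upwards [htend.eventually (isOpen_Ioi.eventually_mem hDpos)] with n hn
      have hmem : t + 1/((n:ℝ)+1) ∈ Set.Ioi t := by
        simp only [Set.mem_Ioi]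
        have : (0:ℝ) < 1/((n:ℝ)+1) := by positivity
        linarith
      calc sInf (g '' Set.Ioi t) ≤ g (t + 1/((n:ℝ)+1)) :=
            sInf_le (Set.mem_image_of_mem g hmem)
        _ ≤ P ((fun ω => (ζ ω, V ω)) ⁻¹' (E n)) / νμ (E n) := by
            rw [hg_apply]
            exact iInf₂_le (E n) ⟨hEm n, Set.inter_subset_right, hn⟩
        _ ≤ _ := ENNReal.div_le_div_right
            (measure_mono (Set.preimage_mono Set.inter_subset_left)) _
    · rintro b ⟨u, hu, rfl⟩
      exact hg_mono (le_of_lt hu)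
  have hgc : ∀ t : ℝ, ContinuousWithinAt g (Set.Ici t) t := by
    intro t
    rw [← continuousWithinAt_Ioi_iff_Ici]
    have h4 := hg_mono.tendsto_nhdsGT t
    rw [hsInf t] at h4
    exact h4
  refine ⟨?_, ?_, ?_⟩
  · intro t ht
    have huniv : νμ (Set.univ : Set (ℝ × S)) = 1 := measure_univ
    rw [hσStar t]
    calc (⨅ (C : Set (ℝ × S)) (_ : MeasurableSet C ∧ 0 < νμ C),
          P ((fun ω => (ζ ω - t, V ω)) ⁻¹' C) / νμ C)
        ≤ P ((fun ω => (ζ ω - t, V ω)) ⁻¹' Set.univ) / νμ Set.univ :=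
          iInf₂_le Set.univ ⟨MeasurableSet.univ, by rw [huniv]; norm_num⟩
      _ ≤ 1 := by
          rw [huniv, Set.preimage_univ, div_one]
          exact prob_le_one
  · intro s t hs hst
    rw [key s hs, key t (hs.trans hst)]
    exact hg_mono hst
  · intro t ht
    exact (hgc t).congr (fun u hu => key u (ht.trans hu)) (key t ht)
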